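/- Let e = (0,0,1) ∈ ℝ³ and let B be the open ball of center b and radius ρ > 0, where ‖b‖ = 1 and B is tangent to the open ball of center e and radius 1, i.e. ‖b − e‖ = 1 + ρ. Then for any two points p, q ∈ B whose third coordinates are zero (i.e. p, q lie in the intersection of B with the equatorial plane), one has ⟨p, q⟩ > 0. (Thus the intersection of B with the equatorial plane is seen from the origin at an angle strictly less than π/2.) -/

import Mathlib

open Metric RealInnerProductSpace

/-- The north pole `e = (0,0,1)` of the unit sphere. -/
noncomputable def northPole : EuclideanSpace ℝ (Fin 3) :=
  WithLp.toLp 2 (fun i => if i = 2 then 1 else 0)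

/-- Core 2D algebraic lemma: if a disk of squared radius `r2` centered at `c = (B0, B1)`
satisfies `‖c‖² ≥ 2 r2`, then any two points of the open disk have positive dot product.
Proof via the Lagrange identity `⟨p,q⟩‖c‖² = (p·c)(q·c) + (p×c)(q×c)`: the hypotheses
force each point to be within 45° of the direction of `c`. -/
lemma aux2d (B0 B1 r2 P0 P1 Q0 Q1 : ℝ)
    (hM : 2*r2 ≤ B0^2 + B1^2)
    (hp : (P0-B0)^2 + (P1-B1)^2 < r2)
    (hq : (Q0-B0)^2 + (Q1-B1)^2 < r2) :
    0 < P0*Q0 + P1*Q1 := by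
  have hr2 : 0 < r2 := lt_of_le_of_lt (by positivity) hp
  have hMpos : 0 < B0^2 + B1^2 := by nlinarith
  have key : ∀ R0 R1 : ℝ, (R0-B0)^2 + (R1-B1)^2 < r2 →
      (R0*B1 - R1*B0)^2 < (R0*B0 + R1*B1)^2 ∧ 0 < R0*B0 + R1*B1 := by
    intro R0 R1 h
    have hS : 0 < R0*B0 + R1*B1 := by
      nlinarith [sq_nonneg ((R0-B0)*B1 - (R1-B1)*B0),
        mul_lt_mul_of_pos_right h hMpos]
    refine ⟨?_, hS⟩
    nlinarith [sq_nonneg (2*(R0*B0+R1*B1) - (B0^2+B1^2)),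
      mul_lt_mul_of_pos_right h hMpos, sq_nonneg (R0*B1 - R1*B0)]
  obtain ⟨hkp, hSpPos⟩ := key P0 P1 hp
  obtain ⟨hkq, hSqPos⟩ := key Q0 Q1 hq
  have hprod : 0 < (P0*B0+P1*B1)*(Q0*B0+Q1*B1) + (P0*B1-P1*B0)*(Q0*B1-Q1*B0) := by
    nlinarith [mul_pos hSpPos hSqPos, sq_nonneg ((P0*B1-P1*B0)*(Q0*B1-Q1*B0)),
      mul_lt_mul'' hkq hkp (sq_nonneg _) (sq_nonneg _)]
  nlinarith [mul_pos hMpos hMpos]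

/-- The tangency condition forces `‖(b₀,b₁)‖² ≥ 2(ρ² - b₂²)`, via the factorization
`1 + b₂² - 2ρ² = (1-ρ)²(1+ρ)(5+ρ)/4 ≥ 0` where `b₂ = (1-2ρ-ρ²)/2` and `ρ ≤ 1`. -/
lemma tangency_aux (b0 b1 b2 ρ : ℝ) (hρ : 0 < ρ)
    (h1 : b0^2+b1^2+b2^2 = 1) (h2 : b0^2+b1^2+(b2-1)^2 = (1+ρ)^2) :
    2*(ρ^2-b2^2) ≤ b0^2+b1^2 := by
  have hb2 : b2 = (1-2*ρ-ρ^2)/2 := by nlinarith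
  have hy : ((ρ+1)^2 - 2)^2 ≤ 4 := by nlinarith [sq_nonneg b0, sq_nonneg b1]
  have hy4 : (ρ+1)^2 ≤ 4 := by nlinarith [sq_nonneg (ρ+1)]
  have hρ1 : ρ ≤ 1 := by nlinarith
  nlinarith [mul_nonneg (mul_nonneg (sq_nonneg (1-ρ)) (by linarith : (0:ℝ) ≤ 1+ρ))
    (by linarith : (0:ℝ) ≤ 5+ρ)]

/-- If an open ball `B` of center `b` (on the unit sphere) and radius `ρ` is tangent
to the open unit ball centered at `e = (0,0,1)`, then any two points of `B` lying
in the equatorial plane have positive inner product: the intersection of `B` with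
the equatorial plane is seen from the origin at an angle less than `π/2`. -/
theorem equatorial_intersection_angle_lt_pi_div_two
    (b : EuclideanSpace ℝ (Fin 3)) (ρ : ℝ) (hρ : 0 < ρ) (hb : ‖b‖ = 1)
    (htan : ‖b - northPole‖ = 1 + ρ)
    (p q : EuclideanSpace ℝ (Fin 3))
    (hp : p ∈ Metric.ball b ρ) (hq : q ∈ Metric.ball b ρ)
    (hp2 : p 2 = 0) (hq2 : q 2 = 0) :
    0 < ⟪p, q⟫ := by
  -- coordinate form of the hypotheses
  have h1 : (b 0)^2 + (b 1)^2 + (b 2)^2 = 1 := by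
    have h := EuclideanSpace.norm_eq b
    rw [hb] at h
    have h2 : (1:ℝ)^2 = (∑ i, ‖b i‖^2) := by
      rw [h, Real.sq_sqrt (by positivity)]
    simp [Fin.sum_univ_three, Real.norm_eq_abs, sq_abs] at h2
    linarith
  have h2 : (b 0)^2 + (b 1)^2 + (b 2 - 1)^2 = (1+ρ)^2 := by
    have h := EuclideanSpace.norm_eq (b - northPole)
    rw [htan] at h
    have h2 : (1+ρ)^2 = (∑ i, ‖(b - northPole) i‖^2) := by
      rw [h, Real.sq_sqrt (by positivity)]
    simp [Fin.sum_univ_three, Real.norm_eq_abs, sq_abs, northPole] at h2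
    linarith
  have hball : ∀ x : EuclideanSpace ℝ (Fin 3), x ∈ Metric.ball b ρ → x 2 = 0 →
      (x 0 - b 0)^2 + (x 1 - b 1)^2 < ρ^2 - (b 2)^2 := by
    intro x hx hx2
    rw [mem_ball, EuclideanSpace.dist_eq, Real.sqrt_lt' hρ] at hx
    have : (x 0 - b 0)^2 + (x 1 - b 1)^2 + (x 2 - b 2)^2 < ρ^2 := by
      simpa [Fin.sum_univ_three, Real.dist_eq, sq_abs] using hx
    rw [hx2] at this
    nlinarith
  have hp' := hball p hp hp2
  have hq' := hball q hq hq2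
  have hM : 2*(ρ^2 - (b 2)^2) ≤ (b 0)^2 + (b 1)^2 :=
    tangency_aux (b 0) (b 1) (b 2) ρ hρ h1 h2
  have key : 0 < p 0 * q 0 + p 1 * q 1 :=
    aux2d (b 0) (b 1) (ρ^2 - (b 2)^2) (p 0) (p 1) (q 0) (q 1) hM hp' hq'
  have hinner : ⟪p, q⟫ = p 0 * q 0 + p 1 * q 1 + p 2 * q 2 := by
    simp [PiLp.inner_apply, Fin.sum_univ_three, RCLike.inner_apply]
    ring
  rw [hinner, hp2]
  simpa using key
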